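/- Let n ≥ 2 and σ ∈ (0,2). Let Γ : ℝ^n → ℝ be bounded and Lebesgue measurable with Γ ≤ 0 everywhere and Γ = 0 outside the closed ball of radius 3 centered at the origin. Let P := Γ * K_{2−σ}, and let x₀ with |x₀| ≤ 3 satisfy P(x₀) = inf_{ℝ^n} P. If R > 9 satisfies ((R−3)/6)^{−(n−2+σ)} ≤ 1/2, then for every x with |x| ≥ R one has P(x) ≥ P(x₀)/2; in particular −inf_{ℝ^n} P + inf_{|x|=R} P ≥ ½·(−inf_{ℝ^n} P). -/

import Mathlib

open MeasureTheory

noncomputable section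

/-- The constant `A(n,α) = π^{α - n/2} Γ((n-α)/2) / Γ(α/2)`. -/
def rieszA (n : ℕ) (α : ℝ) : ℝ :=
  Real.pi ^ (α - (n : ℝ) / 2) * Real.Gamma (((n : ℝ) - α) / 2) / Real.Gamma (α / 2)

/-- The Riesz kernel of order `2 - σ`: `K_{2-σ}(y) = A(n,2-σ)·|y|^{-n+2-σ}`. -/
def rieszKernel (n : ℕ) (σ : ℝ) (y : EuclideanSpace ℝ (Fin n)) : ℝ :=
  rieszA n (2 - σ) * ‖y‖ ^ (-(n : ℝ) + 2 - σ)

/-- The Riesz potential `P = Γ * K_{2-σ}` (convolution over `ℝⁿ`). -/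
def rieszPotential (n : ℕ) (σ : ℝ) (Γ : EuclideanSpace ℝ (Fin n) → ℝ)
    (x : EuclideanSpace ℝ (Fin n)) : ℝ :=
  ∫ y : EuclideanSpace ℝ (Fin n), Γ y * rieszKernel n σ (x - y)

/-- decay of the potential. If `((R-3)/6)^{-(n-2+σ)} ≤ 1/2` then `P ≥ P(x₀)/2`
outside `B_R`, and `-inf P + inf_{|x|=R} P ≥ (1/2)(-inf P)`. -/
theorem stmt9 (n : ℕ) (hn : 2 ≤ n) (σ : ℝ) (hσ : σ ∈ Set.Ioo (0 : ℝ) 2)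
    (Γ : EuclideanSpace ℝ (Fin n) → ℝ)
    (hb : ∃ B : ℝ, ∀ z, |Γ z| ≤ B) (hm : Measurable Γ)
    (hneg : ∀ z, Γ z ≤ 0)
    (hsupp : ∀ z : EuclideanSpace ℝ (Fin n), z ∉ Metric.closedBall 0 3 → Γ z = 0)
    (P : EuclideanSpace ℝ (Fin n) → ℝ) (hP : P = rieszPotential n σ Γ)
    (x₀ : EuclideanSpace ℝ (Fin n)) (hx₀ : ‖x₀‖ ≤ 3)
    (hmin : ∀ z, P x₀ ≤ P z)
    (R : ℝ) (hR : 9 < R)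
    (hRsmall : ((R - 3) / 6) ^ (-((n : ℝ) - 2 + σ)) ≤ 1 / 2) :
    (∀ x : EuclideanSpace ℝ (Fin n), R ≤ ‖x‖ → P x₀ / 2 ≤ P x) ∧
    (1 / 2) * (-(⨅ z : EuclideanSpace ℝ (Fin n), P z)) ≤
      -(⨅ z : EuclideanSpace ℝ (Fin n), P z) +
        ⨅ x : Metric.sphere (0 : EuclideanSpace ℝ (Fin n)) R, P x := by
  obtain ⟨B, hB⟩ := hb
  obtain ⟨hσ0, hσ2⟩ := hσ
  set e : ℝ := -(n : ℝ) + 2 - σ with he_def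
  have hn2 : (2 : ℝ) ≤ (n : ℝ) := by exact_mod_cast hn
  have he : e ≤ 0 := by simp only [he_def]; linarith
  set A : ℝ := rieszA n (2 - σ) with hA_def
  have hA : 0 < A := by
    have h1 : 0 < Real.pi ^ ((2 - σ) - (n : ℝ) / 2) :=
      Real.rpow_pos_of_pos Real.pi_pos _
    have h2 : 0 < Real.Gamma (((n : ℝ) - (2 - σ)) / 2) :=
      Real.Gamma_pos_of_pos (by linarith)
    have h3 : 0 < Real.Gamma ((2 - σ) / 2) :=
      Real.Gamma_pos_of_pos (by linarith)
    exact div_pos (mul_pos h1 h2) h3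
  -- integrability of Γ
  have hball : Integrable
      ((Metric.closedBall (0 : EuclideanSpace ℝ (Fin n)) 3).indicator fun _ => B) :=
    (integrableOn_const measure_closedBall_lt_top.ne).integrable_indicator
      Metric.isClosed_closedBall.measurableSet
  have hΓint : Integrable Γ := by
    refine hball.mono' hm.aestronglyMeasurable (Filter.Eventually.of_forall fun z => ?_)
    by_cases hz : z ∈ Metric.closedBall (0 : EuclideanSpace ℝ (Fin n)) 3
    · simpa [Set.indicator_of_mem hz] using hB z
    · simp [Set.indicator_of_notMem hz, hsupp z hz]
  set I : ℝ := ∫ y, Γ y with hI_def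
  -- measurability of the integrands
  have hker : ∀ x : EuclideanSpace ℝ (Fin n),
      AEStronglyMeasurable
        (fun y : EuclideanSpace ℝ (Fin n) => Γ y * (A * ‖x - y‖ ^ e)) volume := by
    intro x
    have h1 : Measurable fun y : EuclideanSpace ℝ (Fin n) => A * ‖x - y‖ ^ e := by
      fun_prop
    exact (hm.mul h1).aestronglyMeasurable
  have hPdef : ∀ x : EuclideanSpace ℝ (Fin n),
      P x = ∫ y, Γ y * (A * ‖x - y‖ ^ e) := by
    intro x; rw [hP]; rfl
  -- Lower bound for P x when ‖x‖ ≥ R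
  have hfar : ∀ x : EuclideanSpace ℝ (Fin n), R ≤ ‖x‖ → I * (A * (R - 3) ^ e) ≤ P x := by
    intro x hx
    have hR3 : (0 : ℝ) < R - 3 := by linarith
    have hptwise : ∀ y : EuclideanSpace ℝ (Fin n),
        Γ y * (A * (R - 3) ^ e) ≤ Γ y * (A * ‖x - y‖ ^ e) := by
      intro y
      by_cases hy : y ∈ Metric.closedBall (0 : EuclideanSpace ℝ (Fin n)) 3
      · have hy3 : ‖y‖ ≤ 3 := by simpa [Metric.mem_closedBall, dist_zero_right] using hy
        have hxy : R - 3 ≤ ‖x - y‖ := by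
          have hxy' : ‖x‖ - ‖y‖ ≤ ‖x - y‖ := norm_sub_norm_le x y
          linarith
        have hk : ‖x - y‖ ^ e ≤ (R - 3) ^ e :=
          Real.rpow_le_rpow_of_nonpos hR3 hxy he
        have hk2 : A * ‖x - y‖ ^ e ≤ A * (R - 3) ^ e :=
          mul_le_mul_of_nonneg_left hk hA.le
        exact mul_le_mul_of_nonpos_left hk2 (hneg y)
      · simp [hsupp y hy]
    have hint2 : Integrable
        (fun y : EuclideanSpace ℝ (Fin n) => Γ y * (A * ‖x - y‖ ^ e)) := by
      refine (hball.const_mul (A * (R - 3) ^ e)).mono' (hker x)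
        (Filter.Eventually.of_forall fun y => ?_)
      by_cases hy : y ∈ Metric.closedBall (0 : EuclideanSpace ℝ (Fin n)) 3
      · have hy3 : ‖y‖ ≤ 3 := by simpa [Metric.mem_closedBall, dist_zero_right] using hy
        have hxy : R - 3 ≤ ‖x - y‖ := by
          have hxy' : ‖x‖ - ‖y‖ ≤ ‖x - y‖ := norm_sub_norm_le x y
          linarith
        have hk : ‖x - y‖ ^ e ≤ (R - 3) ^ e :=
          Real.rpow_le_rpow_of_nonpos hR3 hxy he
        have hknn : (0 : ℝ) ≤ ‖x - y‖ ^ e := Real.rpow_nonneg (norm_nonneg _) _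
        have hBnn : (0 : ℝ) ≤ B := (abs_nonneg _).trans (hB y)
        rw [Set.indicator_of_mem hy]
        calc ‖Γ y * (A * ‖x - y‖ ^ e)‖ = |Γ y| * (A * ‖x - y‖ ^ e) := by
              rw [Real.norm_eq_abs, abs_mul,
                abs_of_nonneg (mul_nonneg hA.le hknn)]
          _ ≤ B * (A * (R - 3) ^ e) :=
              mul_le_mul (hB y) (mul_le_mul_of_nonneg_left hk hA.le)
                (mul_nonneg hA.le hknn) hBnn
          _ = A * (R - 3) ^ e * B := by ring
      · rw [Set.indicator_of_notMem hy]
        simp [hsupp y hy]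
    have hmono := integral_mono (hΓint.mul_const _) hint2 hptwise
    rw [integral_mul_const] at hmono
    rw [hPdef x]
    exact hmono
  -- Main pointwise claim
  have key : ∀ x : EuclideanSpace ℝ (Fin n), R ≤ ‖x‖ → P x₀ / 2 ≤ P x := by
    intro x hx
    by_cases hsign : 0 ≤ P x₀
    · have := hmin x; linarith
    push_neg at hsign
    -- the integrand at x₀ must be integrable
    have hint0 : Integrable
        (fun y : EuclideanSpace ℝ (Fin n) => Γ y * (A * ‖x₀ - y‖ ^ e)) := by
      by_contra hcon
      rw [hPdef x₀, integral_undef hcon] at hsign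
      exact absurd hsign (by norm_num)
    -- a.e. comparison at x₀
    haveI : Nontrivial (EuclideanSpace ℝ (Fin n)) := by
      have : (⟨0, by omega⟩ : Fin n) = ⟨0, by omega⟩ := rfl
      refine ⟨EuclideanSpace.single (⟨0, by omega⟩ : Fin n) (1 : ℝ), 0, fun h => ?_⟩
      have := congrArg (fun f : EuclideanSpace ℝ (Fin n) => f ⟨0, by omega⟩) h
      simp [EuclideanSpace.single_apply] at this
    have hae : ∀ᵐ y : EuclideanSpace ℝ (Fin n), y ≠ x₀ := by
      refine ae_iff.2 ?_
      have hset : {y : EuclideanSpace ℝ (Fin n) | ¬ y ≠ x₀} = {x₀} := by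
        ext y; simp
      rw [hset]
      exact measure_singleton x₀
    have hcmp : ∀ᵐ y : EuclideanSpace ℝ (Fin n),
        Γ y * (A * ‖x₀ - y‖ ^ e) ≤ Γ y * (A * (6 : ℝ) ^ e) := by
      filter_upwards [hae] with y hy
      by_cases hyb : y ∈ Metric.closedBall (0 : EuclideanSpace ℝ (Fin n)) 3
      · have hy3 : ‖y‖ ≤ 3 := by simpa [Metric.mem_closedBall, dist_zero_right] using hyb
        have hpos : (0 : ℝ) < ‖x₀ - y‖ := by
          rw [norm_pos_iff, sub_ne_zero]
          exact fun h => hy h.symm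
        have hle6 : ‖x₀ - y‖ ≤ 6 := by
          calc ‖x₀ - y‖ ≤ ‖x₀‖ + ‖y‖ := norm_sub_le _ _
            _ ≤ 6 := by linarith
        have hk : (6 : ℝ) ^ e ≤ ‖x₀ - y‖ ^ e :=
          Real.rpow_le_rpow_of_nonpos hpos hle6 he
        exact mul_le_mul_of_nonpos_left (mul_le_mul_of_nonneg_left hk hA.le) (hneg y)
      · simp [hsupp y hyb]
    have hL2 : P x₀ ≤ I * (A * (6 : ℝ) ^ e) := by
      have hmono := integral_mono_ae hint0 (hΓint.mul_const _) hcmp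
      rw [integral_mul_const] at hmono
      rw [hPdef x₀]
      exact hmono
    -- combine
    set ρ : ℝ := ((R - 3) / 6) ^ (-((n : ℝ) - 2 + σ)) with hρ_def
    have hee : -((n : ℝ) - 2 + σ) = e := by simp only [he_def]; ring
    have hρnn : (0 : ℝ) ≤ ρ := Real.rpow_nonneg (by linarith [hR] : (0:ℝ) ≤ (R-3)/6) _
    have h6pos : (0 : ℝ) < (6 : ℝ) ^ e := Real.rpow_pos_of_pos (by norm_num) _
    have hρ6 : ρ * (6 : ℝ) ^ e = (R - 3) ^ e := by
      rw [hρ_def, hee, Real.div_rpow (by linarith) (by norm_num)]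
      field_simp
    have h1 : ρ * P x₀ ≤ ρ * (I * (A * (6 : ℝ) ^ e)) :=
      mul_le_mul_of_nonneg_left hL2 hρnn
    have h2 : ρ * (I * (A * (6 : ℝ) ^ e)) = I * (A * (R - 3) ^ e) := by
      rw [← hρ6]; ring
    have h3 := hfar x hx
    have h4 : P x₀ / 2 ≤ ρ * P x₀ := by nlinarith [hRsmall]
    calc P x₀ / 2 ≤ ρ * P x₀ := h4
      _ ≤ ρ * (I * (A * (6 : ℝ) ^ e)) := h1
      _ = I * (A * (R - 3) ^ e) := h2
      _ ≤ P x := h3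
  refine ⟨key, ?_⟩
  -- the infimum over all of space is P x₀
  have hbdd : BddBelow (Set.range P) := ⟨P x₀, by rintro _ ⟨z, rfl⟩; exact hmin z⟩
  have hinf : (⨅ z : EuclideanSpace ℝ (Fin n), P z) = P x₀ :=
    le_antisymm (ciInf_le hbdd x₀) (le_ciInf hmin)
  -- the sphere is nonempty
  have hne : Nonempty (Metric.sphere (0 : EuclideanSpace ℝ (Fin n)) R) := by
    refine ⟨⟨EuclideanSpace.single (⟨0, by omega⟩ : Fin n) R, ?_⟩⟩
    rw [mem_sphere_zero_iff_norm, EuclideanSpace.norm_single, Real.norm_eq_abs,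
      abs_of_pos (by linarith)]
  have hsph : P x₀ / 2 ≤ ⨅ x : Metric.sphere (0 : EuclideanSpace ℝ (Fin n)) R, P x := by
    refine le_ciInf fun x => ?_
    refine key x.1 ?_
    have hx := x.2
    rw [mem_sphere_zero_iff_norm] at hx
    exact hx.ge
  rw [hinf]
  linarith
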